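/- Any 3AP decomposition of U_n for n prime, in which the three generators (forming an arithmetic progression in Z/nZ) have orders 2, 3 and (n−1)/6 in some order, arises in one of the following ways: the generators are, up to reversal of the progression, (x₂+1, −1, x₁) with ord(x₁) = (n−1)/6; or (2x₂+3, x₂+1, −1) with ord(2x₂+3) = (n−1)/6; or (x_i+1, 2⁻¹x_i, −1) with ord(2⁻¹x_i) = (n−1)/6; where x₁, x₂ are the roots of x² + 3x + 3 = 0 in Z/nZ, x₁ of odd order and x₂ of even order. -/

import Mathlib

/-- `G` is the internal direct product of the cyclic subgroups generated by `x`, `y`, `z`: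
the multiplication map from the product of the three subgroups is a bijection onto `G`. -/
def IsDirectProd3 {G : Type*} [Group G] (x y z : G) : Prop :=
  Function.Bijective
    (fun p : (Subgroup.zpowers x) × (Subgroup.zpowers y) × (Subgroup.zpowers z) =>
      (p.1 : G) * (p.2.1 : G) * (p.2.2 : G))


/-- The triple `(a, b, c)` in `ZMod n` matches one of the three constructions of a
3AP decomposition with orders `2, 3, (n-1)/6`, in terms of the roots `x₁, x₂` of
`x² + 3x + 3 = 0`. -/
def Pattern (n : ℕ) (a b c x₁ x₂ : ZMod n) : Prop :=
  ((a, b, c) = (x₂ + 1, -1, x₁) ∧ orderOf x₁ = (n - 1) / 6) ∨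
  ((a, b, c) = (2 * x₂ + 3, x₂ + 1, -1) ∧ orderOf (2 * x₂ + 3) = (n - 1) / 6) ∨
  (∃ x ∈ ({x₁, x₂} : Set (ZMod n)),
    (a, b, c) = (x + 1, (2 : ZMod n)⁻¹ * x, -1) ∧
    orderOf ((2 : ZMod n)⁻¹ * x) = (n - 1) / 6)

section Aux

variable {n : ℕ} [Fact n.Prime]

lemma aux_cast_ne_zero (h7 : 7 ≤ n) {k : ℕ} (hk : 0 < k) (hk7 : k < 7) :
    ((k : ZMod n)) ≠ 0 := by
  rw [Ne, ZMod.natCast_eq_zero_iff]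
  intro h
  have := Nat.le_of_dvd hk h
  omega

lemma aux_two_ne_zero (h7 : 7 ≤ n) : (2 : ZMod n) ≠ 0 := by
  have := aux_cast_ne_zero (n := n) h7 (k := 2) (by norm_num) (by norm_num)
  simpa using this

lemma aux_three_ne_zero (h7 : 7 ≤ n) : (3 : ZMod n) ≠ 0 := by
  have := aux_cast_ne_zero (n := n) h7 (k := 3) (by norm_num) (by norm_num)
  simpa using this

lemma aux_neg_one_ne_one (h7 : 7 ≤ n) : (1 : ZMod n) ≠ -1 := by
  intro h
  exact aux_two_ne_zero h7 (by linear_combination h)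

lemma aux_pm (hodd : n % 2 = 1) {x : ZMod n} (hx : x ≠ 0) :
    x ^ ((n - 1) / 2) = 1 ∨ x ^ ((n - 1) / 2) = -1 := by
  have h : (x ^ ((n - 1) / 2)) * (x ^ ((n - 1) / 2)) = 1 := by
    rw [← pow_add, show (n - 1) / 2 + (n - 1) / 2 = n - 1 by omega]
    exact ZMod.pow_card_sub_one_eq_one hx
  exact mul_self_eq_one_iff.mp h

lemma aux_odd_order_iff (hodd : n % 2 = 1) (hso : Odd ((n - 1) / 2)) {x : ZMod n}
    (hx : x ≠ 0) : Odd (orderOf x) ↔ x ^ ((n - 1) / 2) = 1 := by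
  constructor
  · intro h
    have hd : orderOf x ∣ n - 1 :=
      orderOf_dvd_of_pow_eq_one (ZMod.pow_card_sub_one_eq_one hx)
    rw [show n - 1 = 2 * ((n - 1) / 2) by omega] at hd
    exact orderOf_dvd_iff_pow_eq_one.mp (h.coprime_two_right.dvd_of_dvd_mul_left hd)
  · intro h
    have hd : orderOf x ∣ (n - 1) / 2 := orderOf_dvd_of_pow_eq_one h
    rcases Nat.even_or_odd (orderOf x) with he | ho
    · exfalso
      obtain ⟨r, hr⟩ := dvd_trans he.two_dvd hd
      rw [Nat.odd_iff] at hso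
      omega
    · exact ho

lemma aux_three_pow (h7 : 7 ≤ n) (hodd : n % 2 = 1) (hso : Odd ((n - 1) / 2))
    {g : ZMod n} (hg : g ^ 2 + g + 1 = 0) :
    (3 : ZMod n) ^ ((n - 1) / 2) = -1 := by
  have key : (2 * g + 1) ^ 2 = -3 := by linear_combination 4 * hg
  have hne : (2 * g + 1) ≠ 0 := by
    intro h
    rw [h] at key
    apply aux_three_ne_zero h7
    linear_combination key
  have h1 : ((-3 : ZMod n)) ^ ((n - 1) / 2) = 1 := by
    rw [← key, ← pow_mul, show 2 * ((n - 1) / 2) = n - 1 by omega]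
    exact ZMod.pow_card_sub_one_eq_one hne
  calc (3 : ZMod n) ^ ((n - 1) / 2) = ((-1) * (-3 : ZMod n)) ^ ((n - 1) / 2) := by ring_nf
    _ = ((-1 : ZMod n)) ^ ((n - 1) / 2) * ((-3 : ZMod n)) ^ ((n - 1) / 2) := mul_pow _ _ _
    _ = -1 := by rw [h1, Odd.neg_one_pow hso, mul_one]

/-- Core facts about the two roots `x` and `-3-x`. -/
lemma aux_roots (h7 : 7 ≤ n) (hodd : n % 2 = 1) (hso : Odd ((n - 1) / 2))
    {g x : ZMod n} (hg : g ^ 2 + g + 1 = 0) (hx : x ^ 2 + 3 * x + 3 = 0)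
    (hxs : x ^ ((n - 1) / 2) = -1) :
    (-3 - x) ^ 2 + 3 * (-3 - x) + 3 = 0 ∧ (-3 - x) ≠ x ∧
      (-3 - x) ^ ((n - 1) / 2) = 1 := by
  have hmul : x * (-3 - x) = 3 := by linear_combination -hx
  have hx0 : x ≠ 0 := by
    intro h; apply aux_three_ne_zero h7; rw [h] at hx; linear_combination hx
  have hy0 : (-3 - x) ≠ 0 := by
    intro h; apply aux_three_ne_zero h7; rw [h, mul_zero] at hmul
    linear_combination -hmul
  have hys : (-3 - x) ^ ((n - 1) / 2) = 1 := by
    have hprod : (-3 - x) ^ ((n - 1) / 2) * x ^ ((n - 1) / 2) = -1 := by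
      rw [← mul_pow, mul_comm, hmul]
      exact aux_three_pow h7 hodd hso hg
    rcases aux_pm hodd hy0 with h | h
    · exact h
    · exfalso
      rw [h, hxs] at hprod
      exact aux_neg_one_ne_one h7 (by linear_combination hprod)
  refine ⟨by linear_combination hx, ?_, hys⟩
  intro h
  rw [h, hxs] at hys
  exact aux_neg_one_ne_one h7 hys.symm

/-- Produce the labelled pair of roots from the even-order root `x`. -/
lemma aux_pair (h7 : 7 ≤ n) (hodd : n % 2 = 1) (hso : Odd ((n - 1) / 2))
    {g x : ZMod n} (hg : g ^ 2 + g + 1 = 0) (hx : x ^ 2 + 3 * x + 3 = 0)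
    (hxs : x ^ ((n - 1) / 2) = -1) :
    ∃ x₁ : ZMod n, x₁ ^ 2 + 3 * x₁ + 3 = 0 ∧ x₁ ≠ x ∧ x₁ = -3 - x ∧
      Odd (orderOf x₁) ∧ Even (orderOf x) ∧ x₁ ^ ((n - 1) / 2) = 1 := by
  obtain ⟨hroot, hne, hys⟩ := aux_roots h7 hodd hso hg hx hxs
  have h10 : (1 : ZMod n) ≠ 0 := one_ne_zero
  have hs0 : (n - 1) / 2 ≠ 0 := by
    rw [Nat.odd_iff] at hso; omega
  have hy0 : (-3 - x : ZMod n) ≠ 0 := by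
    intro h
    rw [h, zero_pow hs0] at hys
    exact h10 hys.symm
  have hx0 : x ≠ 0 := by
    intro h
    rw [h, zero_pow hs0] at hxs
    apply aux_neg_one_ne_one h7
    linear_combination 2 * hxs
  refine ⟨-3 - x, hroot, hne, rfl, ?_, ?_, hys⟩
  · exact (aux_odd_order_iff hodd hso hy0).mpr hys
  · rw [← Nat.not_odd_iff_even]
    intro hcon
    have := (aux_odd_order_iff hodd hso hx0).mp hcon
    rw [this] at hxs
    exact aux_neg_one_ne_one h7 hxs

lemma aux_g_ne_zero {g : ZMod n} (hg : g ^ 2 + g + 1 = 0) : g ≠ 0 := by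
  intro h
  rw [h] at hg
  simpa using hg

/-- Pattern 1 configuration: `(g, -1, h)` with `g` of order 3 and `h` of order `(n-1)/6`. -/
lemma aux_pat1 (h7 : 7 ≤ n) (hodd : n % 2 = 1) (hso : Odd ((n - 1) / 2))
    (hmo : Odd ((n - 1) / 6)) {g h : ZMod n} (hg : g ^ 2 + g + 1 = 0)
    (hh : orderOf h = (n - 1) / 6) (hrel : h = -2 - g) :
    ∃ x₁ x₂ : ZMod n,
      x₁ ^ 2 + 3 * x₁ + 3 = 0 ∧ x₂ ^ 2 + 3 * x₂ + 3 = 0 ∧ x₁ ≠ x₂ ∧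
      Odd (orderOf x₁) ∧ Even (orderOf x₂) ∧ Pattern n g (-1) h x₁ x₂ := by
  have hx : (g - 1) ^ 2 + 3 * (g - 1) + 3 = 0 := by linear_combination hg
  have hmul : (g - 1) * h = 3 := by rw [hrel]; linear_combination -hx
  have hh0 : h ≠ 0 := by
    intro h0
    rw [h0, mul_zero] at hmul
    exact aux_three_ne_zero h7 (by linear_combination -hmul)
  have hhs : h ^ ((n - 1) / 2) = 1 :=
    (aux_odd_order_iff hodd hso hh0).mp (hh ▸ hmo)
  have hxs : (g - 1) ^ ((n - 1) / 2) = -1 := by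
    have hp : (g - 1) ^ ((n - 1) / 2) * h ^ ((n - 1) / 2) = -1 := by
      rw [← mul_pow, hmul]
      exact aux_three_pow h7 hodd hso hg
    rw [hhs, mul_one] at hp
    exact hp
  obtain ⟨x₁, hr1, hne, heq, hoddo, heveno, -⟩ := aux_pair h7 hodd hso hg hx hxs
  have hx1h : x₁ = h := by rw [heq, hrel]; ring
  refine ⟨x₁, g - 1, hr1, hx, hne, hoddo, heveno, Or.inl ⟨?_, ?_⟩⟩
  · rw [Prod.ext_iff, Prod.ext_iff]
    exact ⟨by ring, rfl, hx1h.symm⟩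
  · rw [hx1h]; exact hh

/-- Pattern 2 configuration: `(a, g, -1)` with `g` of order 3 and `a = 2g+1` of order `(n-1)/6`. -/
lemma aux_pat2 (h7 : 7 ≤ n) (hodd : n % 2 = 1) (hso : Odd ((n - 1) / 2))
    (hmo : Odd ((n - 1) / 6)) (hs3 : (n - 1) / 2 = 3 * ((n - 1) / 6))
    {g a : ZMod n} (hg : g ^ 2 + g + 1 = 0)
    (ha : orderOf a = (n - 1) / 6) (hrel : a = 2 * g + 1) :
    ∃ x₁ x₂ : ZMod n,
      x₁ ^ 2 + 3 * x₁ + 3 = 0 ∧ x₂ ^ 2 + 3 * x₂ + 3 = 0 ∧ x₁ ≠ x₂ ∧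
      Odd (orderOf x₁) ∧ Even (orderOf x₂) ∧ Pattern n a g (-1) x₁ x₂ := by
  have hx : (g - 1) ^ 2 + 3 * (g - 1) + 3 = 0 := by linear_combination hg
  have hmul : (g - 1) * a = 3 * g ^ 2 := by rw [hrel]; linear_combination -hg
  have hg3 : g ^ 3 = 1 := by linear_combination (g - 1) * hg
  have ha0 : a ≠ 0 := by
    intro h0
    rw [h0, mul_zero] at hmul
    have hgz := aux_g_ne_zero hg
    have := mul_ne_zero (aux_three_ne_zero h7) (pow_ne_zero 2 hgz)
    exact this hmul.symm
  have has : a ^ ((n - 1) / 2) = 1 :=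
    (aux_odd_order_iff hodd hso ha0).mp (ha ▸ hmo)
  have hg2s : (g ^ 2) ^ ((n - 1) / 2) = 1 := by
    rw [← pow_mul, hs3, show 2 * (3 * ((n - 1) / 6)) = 3 * (2 * ((n - 1) / 6)) by ring,
      pow_mul, hg3, one_pow]
  have hxs : (g - 1) ^ ((n - 1) / 2) = -1 := by
    have hp : (g - 1) ^ ((n - 1) / 2) * a ^ ((n - 1) / 2) = -1 := by
      rw [← mul_pow, hmul, mul_pow, hg2s, mul_one]
      exact aux_three_pow h7 hodd hso hg
    rw [has, mul_one] at hp
    exact hp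
  obtain ⟨x₁, hr1, hne, heq, hoddo, heveno, -⟩ := aux_pair h7 hodd hso hg hx hxs
  refine ⟨x₁, g - 1, hr1, hx, hne, hoddo, heveno, Or.inr (Or.inl ⟨?_, ?_⟩)⟩
  · rw [Prod.ext_iff, Prod.ext_iff]
    exact ⟨by rw [hrel]; ring, by ring, rfl⟩
  · rw [show 2 * (g - 1) + 3 = a by rw [hrel]; ring]
    exact ha

/-- Pattern 3 configuration: `(g, h, -1)` with `g` of order 3 and `h` of order `(n-1)/6`,
`2h = g - 1`. -/
lemma aux_pat3 (h7 : 7 ≤ n) (hodd : n % 2 = 1) (hso : Odd ((n - 1) / 2))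
    (hmo : Odd ((n - 1) / 6)) {g h : ZMod n} (hg : g ^ 2 + g + 1 = 0)
    (hh : orderOf h = (n - 1) / 6) (hrel : 2 * h = g - 1) :
    ∃ x₁ x₂ : ZMod n,
      x₁ ^ 2 + 3 * x₁ + 3 = 0 ∧ x₂ ^ 2 + 3 * x₂ + 3 = 0 ∧ x₁ ≠ x₂ ∧
      Odd (orderOf x₁) ∧ Even (orderOf x₂) ∧ Pattern n g h (-1) x₁ x₂ := by
  have hx : (g - 1) ^ 2 + 3 * (g - 1) + 3 = 0 := by linear_combination hg
  have hx0 : (g - 1) ≠ 0 := by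
    intro h0
    rw [h0] at hx
    exact aux_three_ne_zero h7 (by linear_combination hx)
  have h2inv : (2 : ZMod n)⁻¹ * (g - 1) = h := by
    rw [← hrel, ← mul_assoc, inv_mul_cancel₀ (aux_two_ne_zero h7), one_mul]
  have htup : ((g, h, (-1 : ZMod n))) =
      ((g - 1) + 1, (2 : ZMod n)⁻¹ * (g - 1), (-1 : ZMod n)) := by
    rw [Prod.ext_iff, Prod.ext_iff]
    exact ⟨by ring, by rw [h2inv], rfl⟩
  have hordinv : orderOf ((2 : ZMod n)⁻¹ * (g - 1)) = (n - 1) / 6 := by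
    rw [h2inv]; exact hh
  rcases aux_pm hodd hx0 with h1 | h1
  · -- g - 1 has odd order: it is x₁
    have hy : (-3 - (g - 1)) ^ 2 + 3 * (-3 - (g - 1)) + 3 = 0 := by linear_combination hx
    have hmul : (g - 1) * (-3 - (g - 1)) = 3 := by linear_combination -hx
    have hy0 : (-3 - (g - 1)) ≠ 0 := by
      intro h0
      rw [h0, mul_zero] at hmul
      exact aux_three_ne_zero h7 (by linear_combination -hmul)
    have hys : (-3 - (g - 1)) ^ ((n - 1) / 2) = -1 := by
      have hp : (g - 1) ^ ((n - 1) / 2) * (-3 - (g - 1)) ^ ((n - 1) / 2) = -1 := by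
        rw [← mul_pow, hmul]
        exact aux_three_pow h7 hodd hso hg
      rw [h1, one_mul] at hp
      exact hp
    obtain ⟨x₁, hr1, hne, heq, hoddo, heveno, -⟩ := aux_pair h7 hodd hso hg hy hys
    have hx1 : x₁ = g - 1 := by rw [heq]; ring
    refine ⟨x₁, -3 - (g - 1), hr1, hy, hne, hoddo, heveno,
      Or.inr (Or.inr ⟨g - 1, Set.mem_insert_iff.mpr (Or.inl hx1.symm), htup, hordinv⟩)⟩
  · -- g - 1 has even order: it is x₂
    obtain ⟨x₁, hr1, hne, heq, hoddo, heveno, -⟩ := aux_pair h7 hodd hso hg hx h1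
    refine ⟨x₁, g - 1, hr1, hx, hne, hoddo, heveno,
      Or.inr (Or.inr ⟨g - 1, Set.mem_insert_iff.mpr (Or.inr rfl), htup, hordinv⟩)⟩

lemma aux_order_two {u : (ZMod n)ˣ} (h7 : 7 ≤ n) (hu : orderOf u = 2) :
    (u : ZMod n) = -1 := by
  have h1 : (u : ZMod n) ^ 2 = 1 := by
    rw [← orderOf_units] at hu
    rw [← hu]
    exact pow_orderOf_eq_one _
  have h2 : (u : ZMod n) * (u : ZMod n) = 1 := by rwa [pow_two] at h1
  rcases mul_self_eq_one_iff.mp h2 with h | h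
  · exfalso
    have : orderOf (u : ZMod n) = 1 := by rw [h]; exact orderOf_one
    rw [orderOf_units, hu] at this
    omega
  · exact h

lemma aux_order_three {u : (ZMod n)ˣ} (hu : orderOf u = 3) :
    ((u : ZMod n)) ^ 2 + (u : ZMod n) + 1 = 0 := by
  have h1 : (u : ZMod n) ^ 3 = 1 := by
    rw [← orderOf_units] at hu
    rw [← hu]
    exact pow_orderOf_eq_one _
  have hne : (u : ZMod n) - 1 ≠ 0 := by
    intro h
    have h2 : (u : ZMod n) = 1 := by linear_combination h
    have : orderOf (u : ZMod n) = 1 := by rw [h2]; exact orderOf_one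
    rw [orderOf_units, hu] at this
    omega
  have hfact : ((u : ZMod n) - 1) * ((u : ZMod n) ^ 2 + (u : ZMod n) + 1) = 0 := by
    linear_combination h1
  rcases mul_eq_zero.mp hfact with h | h
  · exact absurd h hne
  · exact h

end Aux

set_option maxHeartbeats 2000000 in
lemma aux_perm (m oa ob oc : ℕ) (hm2 : m ≠ 2) (hm3 : m ≠ 3)
    (h2m : 2 = oa ∨ 2 = ob ∨ 2 = oc) (h3m : 3 = oa ∨ 3 = ob ∨ 3 = oc)
    (hmm : m = oa ∨ m = ob ∨ m = oc)
    (hao : oa = 2 ∨ oa = 3 ∨ oa = m) (hbo : ob = 2 ∨ ob = 3 ∨ ob = m)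
    (hco : oc = 2 ∨ oc = 3 ∨ oc = m) :
    (oa = 2 ∧ ob = 3 ∧ oc = m) ∨
    (oa = m ∧ ob = 3 ∧ oc = 2) ∨
    (oa = 3 ∧ ob = 2 ∧ oc = m) ∨
    (oa = m ∧ ob = 2 ∧ oc = 3) ∨
    (oa = 3 ∧ ob = m ∧ oc = 2) ∨
    (oa = 2 ∧ ob = m ∧ oc = 3) := by
  rcases hao with h|h|h <;> rcases hbo with h'|h'|h' <;> rcases hco with h''|h''|h'' <;>
    subst h <;> subst h' <;> subst h'' <;> omega

set_option maxHeartbeats 1000000 in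
theorem stmt8 (n : ℕ) (hn : n.Prime) (hmod : n % 36 = 7 ∨ n % 36 = 31)
    (a b c : (ZMod n)ˣ)
    (hAP : (b : ZMod n) - (a : ZMod n) = (c : ZMod n) - (b : ZMod n))
    (hdp : IsDirectProd3 a b c)
    (hords : ({orderOf a, orderOf b, orderOf c} : Multiset ℕ) = {2, 3, (n - 1) / 6}) :
    ∃ x₁ x₂ : ZMod n,
      x₁ ^ 2 + 3 * x₁ + 3 = 0 ∧ x₂ ^ 2 + 3 * x₂ + 3 = 0 ∧ x₁ ≠ x₂ ∧
      Odd (orderOf x₁) ∧ Even (orderOf x₂) ∧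
      (Pattern n (a : ZMod n) (b : ZMod n) (c : ZMod n) x₁ x₂ ∨
       Pattern n (c : ZMod n) (b : ZMod n) (a : ZMod n) x₁ x₂) := by
  haveI := Fact.mk hn
  have h7 : 7 ≤ n := by omega
  have hodd : n % 2 = 1 := by omega
  have hso : Odd ((n - 1) / 2) := by rw [Nat.odd_iff]; omega
  have hmo : Odd ((n - 1) / 6) := by rw [Nat.odd_iff]; omega
  have hs3 : (n - 1) / 2 = 3 * ((n - 1) / 6) := by omega
  have hm2 : (n - 1) / 6 ≠ 2 := by omega
  have hm3 : (n - 1) / 6 ≠ 3 := by omega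
  have h2m : (2 : ℕ) ∈ ({orderOf a, orderOf b, orderOf c} : Multiset ℕ) := by
    rw [hords]; simp
  have h3m : (3 : ℕ) ∈ ({orderOf a, orderOf b, orderOf c} : Multiset ℕ) := by
    rw [hords]; simp
  have hmm : ((n - 1) / 6) ∈ ({orderOf a, orderOf b, orderOf c} : Multiset ℕ) := by
    rw [hords]; simp
  have hao : orderOf a ∈ ({2, 3, (n - 1) / 6} : Multiset ℕ) := by rw [← hords]; simp
  have hbo : orderOf b ∈ ({2, 3, (n - 1) / 6} : Multiset ℕ) := by rw [← hords]; simp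
  have hco : orderOf c ∈ ({2, 3, (n - 1) / 6} : Multiset ℕ) := by rw [← hords]; simp
  simp only [Multiset.insert_eq_cons, Multiset.mem_cons, Multiset.mem_singleton]
    at h2m h3m hmm hao hbo hco
  have perm :
      (orderOf a = 2 ∧ orderOf b = 3 ∧ orderOf c = (n - 1) / 6) ∨
      (orderOf a = (n - 1) / 6 ∧ orderOf b = 3 ∧ orderOf c = 2) ∨
      (orderOf a = 3 ∧ orderOf b = 2 ∧ orderOf c = (n - 1) / 6) ∨
      (orderOf a = (n - 1) / 6 ∧ orderOf b = 2 ∧ orderOf c = 3) ∨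
      (orderOf a = 3 ∧ orderOf b = (n - 1) / 6 ∧ orderOf c = 2) ∨
      (orderOf a = 2 ∧ orderOf b = (n - 1) / 6 ∧ orderOf c = 3) :=
    aux_perm _ _ _ _ hm2 hm3 h2m h3m hmm hao hbo hco
  rcases perm with ⟨h1, h2, h3⟩ | ⟨h1, h2, h3⟩ | ⟨h1, h2, h3⟩ | ⟨h1, h2, h3⟩ |
    ⟨h1, h2, h3⟩ | ⟨h1, h2, h3⟩
  · -- (2, 3, m) : pattern 2 reversed
    have hav : (a : ZMod n) = -1 := aux_order_two h7 h1
    have hg : ((b : ZMod n)) ^ 2 + (b : ZMod n) + 1 = 0 := aux_order_three h2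
    have hcord : orderOf ((c : ZMod n)) = (n - 1) / 6 := by rw [orderOf_units]; exact h3
    have hrel : (c : ZMod n) = 2 * (b : ZMod n) + 1 := by
      rw [hav] at hAP; linear_combination -hAP
    obtain ⟨x₁, x₂, r1, r2, hne, hod, hev, pat⟩ :=
      aux_pat2 h7 hodd hso hmo hs3 hg hcord hrel
    exact ⟨x₁, x₂, r1, r2, hne, hod, hev, Or.inr (by rw [hav]; exact pat)⟩
  · -- (m, 3, 2) : pattern 2 forward
    have hcv : (c : ZMod n) = -1 := aux_order_two h7 h3
    have hg : ((b : ZMod n)) ^ 2 + (b : ZMod n) + 1 = 0 := aux_order_three h2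
    have haord : orderOf ((a : ZMod n)) = (n - 1) / 6 := by rw [orderOf_units]; exact h1
    have hrel : (a : ZMod n) = 2 * (b : ZMod n) + 1 := by
      rw [hcv] at hAP; linear_combination -hAP
    obtain ⟨x₁, x₂, r1, r2, hne, hod, hev, pat⟩ :=
      aux_pat2 h7 hodd hso hmo hs3 hg haord hrel
    exact ⟨x₁, x₂, r1, r2, hne, hod, hev, Or.inl (by rw [hcv]; exact pat)⟩
  · -- (3, 2, m) : pattern 1 forward
    have hbv : (b : ZMod n) = -1 := aux_order_two h7 h2
    have hg : ((a : ZMod n)) ^ 2 + (a : ZMod n) + 1 = 0 := aux_order_three h1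
    have hcord : orderOf ((c : ZMod n)) = (n - 1) / 6 := by rw [orderOf_units]; exact h3
    have hrel : (c : ZMod n) = -2 - (a : ZMod n) := by
      rw [hbv] at hAP; linear_combination -hAP
    obtain ⟨x₁, x₂, r1, r2, hne, hod, hev, pat⟩ :=
      aux_pat1 h7 hodd hso hmo hg hcord hrel
    exact ⟨x₁, x₂, r1, r2, hne, hod, hev, Or.inl (by rw [hbv]; exact pat)⟩
  · -- (m, 2, 3) : pattern 1 reversed
    have hbv : (b : ZMod n) = -1 := aux_order_two h7 h2
    have hg : ((c : ZMod n)) ^ 2 + (c : ZMod n) + 1 = 0 := aux_order_three h3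
    have haord : orderOf ((a : ZMod n)) = (n - 1) / 6 := by rw [orderOf_units]; exact h1
    have hrel : (a : ZMod n) = -2 - (c : ZMod n) := by
      rw [hbv] at hAP; linear_combination -hAP
    obtain ⟨x₁, x₂, r1, r2, hne, hod, hev, pat⟩ :=
      aux_pat1 h7 hodd hso hmo hg haord hrel
    exact ⟨x₁, x₂, r1, r2, hne, hod, hev, Or.inr (by rw [hbv]; exact pat)⟩
  · -- (3, m, 2) : pattern 3 forward
    have hcv : (c : ZMod n) = -1 := aux_order_two h7 h3
    have hg : ((a : ZMod n)) ^ 2 + (a : ZMod n) + 1 = 0 := aux_order_three h1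
    have hbord : orderOf ((b : ZMod n)) = (n - 1) / 6 := by rw [orderOf_units]; exact h2
    have hrel : 2 * (b : ZMod n) = (a : ZMod n) - 1 := by
      rw [hcv] at hAP; linear_combination hAP
    obtain ⟨x₁, x₂, r1, r2, hne, hod, hev, pat⟩ :=
      aux_pat3 h7 hodd hso hmo hg hbord hrel
    exact ⟨x₁, x₂, r1, r2, hne, hod, hev, Or.inl (by rw [hcv]; exact pat)⟩
  · -- (2, m, 3) : pattern 3 reversed
    have hav : (a : ZMod n) = -1 := aux_order_two h7 h1
    have hg : ((c : ZMod n)) ^ 2 + (c : ZMod n) + 1 = 0 := aux_order_three h3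
    have hbord : orderOf ((b : ZMod n)) = (n - 1) / 6 := by rw [orderOf_units]; exact h2
    have hrel : 2 * (b : ZMod n) = (c : ZMod n) - 1 := by
      rw [hav] at hAP; linear_combination hAP
    obtain ⟨x₁, x₂, r1, r2, hne, hod, hev, pat⟩ :=
      aux_pat3 h7 hodd hso hmo hg hbord hrel
    exact ⟨x₁, x₂, r1, r2, hne, hod, hev, Or.inr (by rw [hav]; exact pat)⟩
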